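/- Let H ∈ (0,1), K ∈ (0,1] with 2HK > 1 and let t > 0. For n ≥ 1 set t_j = jt/n for j = 0,…,n. Then the sums S_n = Σ_{j=1}^{n} | 2^{−K}((t_j^{2H} + t_{j−1}^{2H})^K − (t_j − t_{j−1})^{2HK}) − t_{j−1}^{2HK} − (1/2)(t_j^{2HK} − t_{j−1}^{2HK}) | converge to 0 as n → ∞. -/

import Mathlib

open Filter

/-- Weighted AM-GM / Bernoulli: `z^p ≤ p z + (1-p)` for `p ∈ [0,1]`. -/
private lemma bern {z p : ℝ} (hz : 0 ≤ z) (hp0 : 0 ≤ p) (hp1 : p ≤ 1) :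
    z ^ p ≤ p * z + (1 - p) := by
  have h := Real.geom_mean_le_arith_mean2_weighted (w₂ := 1 - p) hp0 (by linarith) hz zero_le_one (by ring)
  simpa using h

/-- Tangent line above a concave power at the left point. -/
private lemma tangent_ub {x y p : ℝ} (hx : 0 < x) (hxy : x ≤ y) (hp0 : 0 ≤ p) (hp1 : p ≤ 1) :
    y ^ p - x ^ p ≤ p * x ^ (p - 1) * (y - x) := by
  have hy : 0 ≤ y := le_trans hx.le hxy
  have hz : (0:ℝ) ≤ y / x := by positivity
  have h := bern hz hp0 hp1
  have hxp : (0:ℝ) < x ^ p := Real.rpow_pos_of_pos hx p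
  have e : y ^ p = (y / x) ^ p * x ^ p := by
    rw [Real.div_rpow hy hx.le, div_mul_cancel₀ _ hxp.ne']
  have h2 : y ^ p ≤ (p * (y / x) + (1 - p)) * x ^ p := by
    rw [e]; exact mul_le_mul_of_nonneg_right h hxp.le
  have e2 : x ^ (p - 1) = x ^ p / x := Real.rpow_sub_one hx.ne' p
  rw [e2]
  have e3 : (p * (y / x) + (1 - p)) * x ^ p - x ^ p = p * (x ^ p / x) * (y - x) := by
    field_simp; ring
  linarith

/-- Tangent line at the right point, from below. -/
private lemma tangent_lb {x y p : ℝ} (hx : 0 ≤ x) (hy : 0 < y) (hxy : x ≤ y) (hp0 : 0 ≤ p)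
    (hp1 : p ≤ 1) : p * y ^ (p - 1) * (y - x) ≤ y ^ p - x ^ p := by
  have hz : (0:ℝ) ≤ x / y := by positivity
  have h := bern hz hp0 hp1
  have hyp : (0:ℝ) < y ^ p := Real.rpow_pos_of_pos hy p
  have e : x ^ p = (x / y) ^ p * y ^ p := by
    rw [Real.div_rpow hx hy.le, div_mul_cancel₀ _ hyp.ne']
  have h2 : x ^ p ≤ (p * (x / y) + (1 - p)) * y ^ p := by
    rw [e]; exact mul_le_mul_of_nonneg_right h hyp.le
  have e2 : y ^ (p - 1) = y ^ p / y := Real.rpow_sub_one hy.ne' p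
  rw [e2]
  have e3 : y ^ p - (p * (x / y) + (1 - p)) * y ^ p = p * (y ^ p / y) * (y - x) := by
    field_simp; ring
  linarith

/-- Convexity-type bound on differences of the derivative. -/
private lemma deriv_diff_le {x y p : ℝ} (hx : 0 < x) (hxy : x ≤ y) (hp0 : 0 ≤ p) (hp1 : p ≤ 1) :
    x ^ (p - 1) - y ^ (p - 1) ≤ (1 - p) * x ^ (p - 2) * (y - x) := by
  set z := y / x with hzdef
  have hz1 : 1 ≤ z := (one_le_div hx).mpr hxy
  have hz0 : (0:ℝ) ≤ z := by linarith
  -- u := z ^ (1 - p) ≥ 1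
  have hu1 : 1 ≤ z ^ (1 - p) := Real.one_le_rpow hz1 (by linarith)
  have hub : z ^ (1 - p) ≤ (1 - p) * z + p := by
    have := bern hz0 (by linarith : (0:ℝ) ≤ 1 - p) (by linarith)
    linarith
  -- z ^ (p - 1) = (z ^ (1-p))⁻¹
  have hinv : z ^ (p - 1) = (z ^ (1 - p))⁻¹ := by
    rw [← Real.rpow_neg hz0]; ring_nf
  -- key scalar inequality : 1 - z^(p-1) ≤ (1-p) * (z - 1)
  have hkey : 1 - z ^ (p - 1) ≤ (1 - p) * (z - 1) := by
    have hupos : 0 < z ^ (1 - p) := by linarith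
    have h1 : 1 - (z ^ (1 - p))⁻¹ ≤ z ^ (1 - p) - 1 := by
      rw [sub_le_sub_iff]
      have : (z ^ (1 - p))⁻¹ * z ^ (1 - p) = 1 := inv_mul_cancel₀ hupos.ne'
      nlinarith [hu1]
    rw [hinv]
    nlinarith [hub]
  -- multiply by x^(p-1) > 0
  have hxp : (0:ℝ) < x ^ (p - 1) := Real.rpow_pos_of_pos hx _
  have hyexp : y ^ (p - 1) = z ^ (p - 1) * x ^ (p - 1) := by
    have hy : y = z * x := by rw [hzdef, div_mul_cancel₀ _ hx.ne']
    rw [hy, Real.mul_rpow hz0 hx.le]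
  have e2 : x ^ (p - 2) = x ^ (p - 1) / x := by
    rw [show p - 2 = p - 1 - 1 by ring, Real.rpow_sub_one hx.ne']
  have h3 := mul_le_mul_of_nonneg_right hkey hxp.le
  rw [hyexp, e2]
  have e4 : (1 - p) * (z - 1) * x ^ (p - 1) = (1 - p) * (x ^ (p - 1) / x) * (y - x) := by
    rw [hzdef]; field_simp
  nlinarith [h3]

/-- Midpoint concavity gap is nonnegative. -/
private lemma gap_nonneg {a b p : ℝ} (ha : 0 ≤ a) (hab : a ≤ b) (hb : 0 < b) (hp0 : 0 ≤ p)
    (hp1 : p ≤ 1) : 0 ≤ ((a + b) / 2) ^ p - (a ^ p + b ^ p) / 2 := by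
  set m := (a + b) / 2 with hm
  have hm0 : 0 < m := by rw [hm]; linarith
  have e1 : m - a = (b - a) / 2 := by rw [hm]; ring
  have e2 : b - m = (b - a) / 2 := by rw [hm]; ring
  have h1 := tangent_lb (x := a) (y := m) ha hm0 (by rw [hm]; linarith) hp0 hp1
  have h2 := tangent_ub (x := m) (y := b) hm0 (by rw [hm]; linarith) hp0 hp1
  rw [e1] at h1
  rw [e2] at h2
  linarith

/-- Quantitative bound on the midpoint concavity gap. -/
private lemma gap_le {a b p : ℝ} (ha : 0 < a) (hab : a ≤ b) (hp0 : 0 ≤ p) (hp1 : p ≤ 1) :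
    ((a + b) / 2) ^ p - (a ^ p + b ^ p) / 2 ≤ a ^ (p - 2) * (b - a) ^ 2 := by
  set m := (a + b) / 2 with hm
  have hba : (0:ℝ) ≤ b - a := by linarith
  have e1 : m - a = (b - a) / 2 := by rw [hm]; ring
  have e2 : b - m = (b - a) / 2 := by rw [hm]; ring
  have h1 := tangent_ub (x := a) (y := m) ha (by rw [hm]; linarith) hp0 hp1
  have h2 := tangent_lb (x := m) (y := b) (by rw [hm]; linarith : (0:ℝ) ≤ m) (by linarith : (0:ℝ) < b)
      (by rw [hm]; linarith) hp0 hp1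
  rw [e1] at h1
  rw [e2] at h2
  have h3 := deriv_diff_le ha hab hp0 hp1
  have h4 : p * ((b - a) / 2) * (a ^ (p - 1) - b ^ (p - 1))
      ≤ p * ((b - a) / 2) * ((1 - p) * a ^ (p - 2) * (b - a)) :=
    mul_le_mul_of_nonneg_left h3 (by positivity)
  have hX : (0:ℝ) ≤ a ^ (p - 2) * (b - a) ^ 2 :=
    mul_nonneg (Real.rpow_nonneg ha.le _) (sq_nonneg _)
  have h5 : p * ((b - a) / 2) * ((1 - p) * a ^ (p - 2) * (b - a))
      ≤ a ^ (p - 2) * (b - a) ^ 2 := by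
    have hpp : p * (1 - p) / 2 ≤ 1 := by nlinarith
    calc p * ((b - a) / 2) * ((1 - p) * a ^ (p - 2) * (b - a))
        = (p * (1 - p) / 2) * (a ^ (p - 2) * (b - a) ^ 2) := by ring
      _ ≤ 1 * (a ^ (p - 2) * (b - a) ^ 2) := mul_le_mul_of_nonneg_right hpp hX
      _ = a ^ (p - 2) * (b - a) ^ 2 := one_mul _
  linarith [h1, h2, h4, h5]

/-- The main quantitative gap bound for `a = x^q`, `b = y^q` with comparable `x ≤ y ≤ 2x`. -/
private lemma gap_bound2 {x y p q : ℝ} (hx : 0 < x) (hxy : x ≤ y) (hy2 : y ≤ 2 * x)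
    (hq0 : 0 < q) (hq2 : q ≤ 2) (hp0 : 0 ≤ p) (hp1 : p ≤ 1) :
    ((x ^ q + y ^ q) / 2) ^ p - ((x ^ q) ^ p + (y ^ q) ^ p) / 2
      ≤ 9 * x ^ (q * p - 2) * (y - x) ^ 2 := by
  have hy0 : 0 < y := lt_of_lt_of_le hx hxy
  have ha : 0 < x ^ q := Real.rpow_pos_of_pos hx q
  have hab : x ^ q ≤ y ^ q := Real.rpow_le_rpow hx.le hxy hq0.le
  have h0 := gap_le ha hab hp0 hp1
  -- bound b - a ≤ 3 * x^(q-1) * (y - x)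
  obtain ⟨z, hy, hz1, hz2⟩ : ∃ z : ℝ, y = x * z ∧ 1 ≤ z ∧ z ≤ 2 := by
    refine ⟨y / x, by field_simp, (one_le_div hx).mpr hxy, ?_⟩
    rw [div_le_iff₀ hx]; linarith
  have hz0 : (0:ℝ) ≤ z := by linarith
  have hzq2 : z ^ q ≤ z * z := by
    have hzq := Real.rpow_le_rpow_of_exponent_le hz1 hq2
    rwa [show (2:ℝ) = ((2:ℕ):ℝ) by norm_num, Real.rpow_natCast, pow_two] at hzq
  have hyz : y ^ q = x ^ q * z ^ q := by rw [hy, Real.mul_rpow hx.le hz0]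
  have hxq1 : x ^ (q - 1) = x ^ q / x := Real.rpow_sub_one hx.ne' q
  have hba : y ^ q - x ^ q ≤ 3 * x ^ (q - 1) * (y - x) := by
    have key : z * z - 1 ≤ 3 * (z - 1) := by
      nlinarith [mul_nonneg (sub_nonneg.2 hz1) (sub_nonneg.2 hz2)]
    have h1 : z ^ q - 1 ≤ 3 * (z - 1) := by linarith [hzq2, key]
    have h3 : x ^ q * (z ^ q - 1) ≤ x ^ q * (3 * (z - 1)) :=
      mul_le_mul_of_nonneg_left h1 ha.le
    have h4 : x ^ q * (3 * (z - 1)) = 3 * (x ^ q / x) * (y - x) := by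
      rw [hy]; field_simp
    rw [hyz, hxq1]; linarith
  -- square the bound
  have hba0 : 0 ≤ y ^ q - x ^ q := by linarith
  have hsq : (y ^ q - x ^ q) ^ 2 ≤ (3 * x ^ (q - 1) * (y - x)) ^ 2 := by
    apply pow_le_pow_left₀ hba0 hba
  have hcoef : 0 ≤ (x ^ q) ^ (p - 2) := Real.rpow_nonneg ha.le _
  have h5 : (x ^ q) ^ (p - 2) * (y ^ q - x ^ q) ^ 2
      ≤ (x ^ q) ^ (p - 2) * (3 * x ^ (q - 1) * (y - x)) ^ 2 :=
    mul_le_mul_of_nonneg_left hsq hcoef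
  -- exponent bookkeeping
  have e1 : (x ^ q) ^ (p - 2) = x ^ (q * (p - 2)) := (Real.rpow_mul hx.le q (p - 2)).symm
  have e2 : (x ^ q) ^ (p - 2) * (3 * x ^ (q - 1) * (y - x)) ^ 2
      = 9 * (x ^ (q * (p - 2)) * (x ^ (q - 1) * x ^ (q - 1))) * (y - x) ^ 2 := by
    rw [e1]; ring
  have e3 : x ^ (q * (p - 2)) * (x ^ (q - 1) * x ^ (q - 1)) = x ^ (q * p - 2) := by
    rw [← Real.rpow_add hx, ← Real.rpow_add hx]; ring_nf
  calc ((x ^ q + y ^ q) / 2) ^ p - ((x ^ q) ^ p + (y ^ q) ^ p) / 2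
      ≤ (x ^ q) ^ (p - 2) * (y ^ q - x ^ q) ^ 2 := h0
    _ ≤ (x ^ q) ^ (p - 2) * (3 * x ^ (q - 1) * (y - x)) ^ 2 := h5
    _ = 9 * x ^ (q * p - 2) * (y - x) ^ 2 := by rw [e2, e3]

/-- Telescoping sum bound: `∑_{i=1}^m i^(p-1) ≤ m^p / p` for `p ∈ (0,1]`. -/
private lemma sum_rpow_le {p : ℝ} (hp0 : 0 < p) (hp1 : p ≤ 1) (m : ℕ) :
    ∑ i ∈ Finset.Icc 1 m, (i : ℝ) ^ (p - 1) ≤ (m : ℝ) ^ p / p := by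
  induction m with
  | zero => simp [Real.zero_rpow hp0.ne']
  | succ n ih =>
    rw [Finset.sum_Icc_succ_top (by omega : 1 ≤ n + 1)]
    have h := tangent_lb (x := (n : ℝ)) (y := ((n : ℝ) + 1)) (by positivity) (by positivity)
      (by linarith) hp0.le hp1
    have h2 : ((n : ℝ) + 1) ^ (p - 1) ≤ (((n : ℝ) + 1) ^ p - (n : ℝ) ^ p) / p := by
      rw [le_div_iff₀ hp0]
      nlinarith [h]
    have e : ((n : ℝ) + 1) ^ p / p - (n : ℝ) ^ p / p = (((n : ℝ) + 1) ^ p - (n : ℝ) ^ p) / p :=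
      (sub_div _ _ _).symm
    push_cast
    linarith [ih, h2]

/-- Gap bound for the points `(r-1) t'` and `r t'`. -/
private lemma gap_final {t' r p q : ℝ} (ht' : 0 < t') (hr12 : r = 1 ∨ 2 ≤ r)
    (hq0 : 0 < q) (hq2 : q ≤ 2) (hp0 : 0 < p) (hp1 : p ≤ 1)
    (hqp1 : 1 ≤ q * p) (hqp2 : q * p ≤ 2) :
    ((((r - 1) * t') ^ q + (r * t') ^ q) / 2) ^ p
        - ((((r - 1) * t') ^ q) ^ p + ((r * t') ^ q) ^ p) / 2
      ≤ t' ^ (q * p) * (1 + 18 * r ^ (q * p - 2)) := by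
  have htqp : (0:ℝ) < t' ^ (q * p) := Real.rpow_pos_of_pos ht' _
  rcases hr12 with hr1 | hr2
  · -- r = 1
    subst hr1
    have hx : ((1:ℝ) - 1) * t' = 0 := by ring
    have hy : (1:ℝ) * t' = t' := by ring
    rw [hx, hy, Real.zero_rpow hq0.ne', Real.zero_rpow hp0.ne', Real.one_rpow]
    have h1 : ((0 + t' ^ q) / 2) ^ p ≤ (t' ^ q) ^ p := by
      apply Real.rpow_le_rpow (by positivity) ?_ hp0.le
      have : (0:ℝ) < t' ^ q := Real.rpow_pos_of_pos ht' _
      linarith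
    have h2 : (t' ^ q) ^ p = t' ^ (q * p) := (Real.rpow_mul ht'.le q p).symm
    have h3 : (0:ℝ) ≤ ((t' ^ q) ^ p) := Real.rpow_nonneg (Real.rpow_nonneg ht'.le _) _
    nlinarith [h1, h2, h3, htqp]
  · -- 2 ≤ r
    have hr0 : (0:ℝ) < r - 1 := by linarith
    have hx0 : 0 < (r - 1) * t' := by positivity
    have hxy : (r - 1) * t' ≤ r * t' := by nlinarith
    have hy2x : r * t' ≤ 2 * ((r - 1) * t') := by nlinarith
    have hgap := gap_bound2 hx0 hxy hy2x hq0 hq2 hp0.le hp1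
    have hd : r * t' - (r - 1) * t' = t' := by ring
    rw [hd] at hgap
    -- bound ((r-1) t')^(qp-2)
    have he : ((r - 1) * t') ^ (q * p - 2) ≤ 2 * r ^ (q * p - 2) * t' ^ (q * p - 2) := by
      have hlow : r / 2 * t' ≤ (r - 1) * t' := by nlinarith
      have hlow0 : 0 < r / 2 * t' := by positivity
      have h1 : ((r - 1) * t') ^ (q * p - 2) ≤ (r / 2 * t') ^ (q * p - 2) :=
        Real.rpow_le_rpow_of_nonpos hlow0 hlow (by linarith)
      have h2 : (r / 2 * t') ^ (q * p - 2) = (r / 2) ^ (q * p - 2) * t' ^ (q * p - 2) :=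
        Real.mul_rpow (by positivity) ht'.le
      have h3 : (r / 2) ^ (q * p - 2) ≤ 2 * r ^ (q * p - 2) := by
        have hrp : (0:ℝ) ≤ r ^ (q * p - 2) := Real.rpow_nonneg (by linarith) _
        have e1 : (r / 2) ^ (q * p - 2) = r ^ (q * p - 2) * ((2:ℝ)⁻¹) ^ (q * p - 2) := by
          rw [div_eq_mul_inv, Real.mul_rpow (by linarith) (by norm_num)]
        have e2 : ((2:ℝ)⁻¹) ^ (q * p - 2) = (2:ℝ) ^ (2 - q * p) := by
          rw [Real.inv_rpow (by norm_num : (0:ℝ) ≤ 2),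
            show (2:ℝ) - q * p = -(q * p - 2) by ring,
            Real.rpow_neg (by norm_num : (0:ℝ) ≤ 2)]
        have e3 : (2:ℝ) ^ (2 - q * p) ≤ 2 := by
          have := Real.rpow_le_rpow_of_exponent_le one_le_two
            (by linarith : 2 - q * p ≤ 1)
          rwa [Real.rpow_one] at this
        calc (r / 2) ^ (q * p - 2) = r ^ (q * p - 2) * (2:ℝ) ^ (2 - q * p) := by rw [e1, e2]
          _ ≤ r ^ (q * p - 2) * 2 := mul_le_mul_of_nonneg_left e3 hrp
          _ = 2 * r ^ (q * p - 2) := by ring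
      have ht'e : (0:ℝ) ≤ t' ^ (q * p - 2) := Real.rpow_nonneg ht'.le _
      calc ((r - 1) * t') ^ (q * p - 2) ≤ (r / 2 * t') ^ (q * p - 2) := h1
        _ = (r / 2) ^ (q * p - 2) * t' ^ (q * p - 2) := h2
        _ ≤ 2 * r ^ (q * p - 2) * t' ^ (q * p - 2) :=
            mul_le_mul_of_nonneg_right h3 ht'e
    -- combine
    have ht2 : t' ^ (q * p - 2) * t' ^ (2:ℕ) = t' ^ (q * p) := by
      rw [← Real.rpow_natCast t' 2, ← Real.rpow_add ht']
      norm_num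
    have hrp : (0:ℝ) ≤ r ^ (q * p - 2) := Real.rpow_nonneg (by linarith) _
    have hsq : (0:ℝ) ≤ t' ^ (2:ℕ) := by positivity
    calc ((((r - 1) * t') ^ q + (r * t') ^ q) / 2) ^ p
          - ((((r - 1) * t') ^ q) ^ p + ((r * t') ^ q) ^ p) / 2
        ≤ 9 * ((r - 1) * t') ^ (q * p - 2) * t' ^ 2 := hgap
      _ ≤ 9 * (2 * r ^ (q * p - 2) * t' ^ (q * p - 2)) * t' ^ 2 := by
          have := mul_le_mul_of_nonneg_right he hsq
          nlinarith [this]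
      _ = 18 * r ^ (q * p - 2) * (t' ^ (q * p - 2) * t' ^ (2:ℕ)) := by ring
      _ = 18 * r ^ (q * p - 2) * t' ^ (q * p) := by rw [ht2]
      _ ≤ t' ^ (q * p) * (1 + 18 * r ^ (q * p - 2)) := by nlinarith [htqp, hrp]

/-- Bound each summand by the gap plus the correction. -/
private lemma abs_term_le {a b D E K : ℝ} (ha0 : 0 ≤ a) (hab : a ≤ b) (hb0 : 0 < b)
    (hD0 : 0 < D) (hE : 0 ≤ E) (hK0 : 0 < K) (hK1 : K ≤ 1)
    (hg : ((a + b) / 2) ^ K - (a ^ K + b ^ K) / 2 ≤ D * (1 + 18 * E)) :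
    |2 ^ (-K) * ((b + a) ^ K - D) - a ^ K - 1/2 * (b ^ K - a ^ K)| ≤ D * (2 + 20 * E) := by
  have h2K : (2:ℝ) ^ (-K) * (b + a) ^ K = ((a + b) / 2) ^ K := by
    rw [add_comm b a, Real.div_rpow (by linarith) (by norm_num : (0:ℝ) ≤ 2),
      Real.rpow_neg (by norm_num : (0:ℝ) ≤ 2)]
    ring
  have key : 2 ^ (-K) * ((b + a) ^ K - D) - a ^ K - 1/2 * (b ^ K - a ^ K)
      = (((a + b) / 2) ^ K - (a ^ K + b ^ K) / 2) - 2 ^ (-K) * D := by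
    rw [← h2K]; ring
  rw [key]
  have hg0 := gap_nonneg ha0 hab hb0 hK0.le hK1
  have hc0 : (0:ℝ) ≤ 2 ^ (-K) * D := by positivity
  have hcD : (2:ℝ) ^ (-K) * D ≤ D := by
    have h1 : (2:ℝ) ^ (-K) ≤ 1 :=
      Real.rpow_le_one_of_one_le_of_nonpos one_le_two (by linarith)
    nlinarith [hD0]
  have hDE : (0:ℝ) ≤ D * E := by positivity
  rw [abs_le]
  constructor
  · nlinarith [hg0, hcD, hD0, hDE]
  · nlinarith [hc0, hg, hD0, hDE]

private lemma term_bound (H K t : ℝ) (hH : H ∈ Set.Ioo (0:ℝ) 1) (hK : K ∈ Set.Ioc (0:ℝ) 1)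
    (hHK : 1 < 2*H*K) (ht : 0 < t) {n j : ℕ} (hn : 1 ≤ n) (hj1 : 1 ≤ j) :
    |2 ^ (-K) * ((((j : ℝ) * t / n) ^ (2*H) + (((j : ℝ) - 1) * t / n) ^ (2*H)) ^ K
              - ((j : ℝ) * t / n - ((j : ℝ) - 1) * t / n) ^ (2*H*K))
          - (((j : ℝ) - 1) * t / n) ^ (2*H*K)
          - (1/2) * (((j : ℝ) * t / n) ^ (2*H*K) - (((j : ℝ) - 1) * t / n) ^ (2*H*K))|
      ≤ (t / n) ^ (2*H*K) * (2 + 20 * (j : ℝ) ^ (2*H*K - 2)) := by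
  obtain ⟨hH0, hH1⟩ := hH
  obtain ⟨hK0, hK1⟩ := hK
  have hn0 : (0:ℝ) < n := by exact_mod_cast hn
  have hj1' : (1:ℝ) ≤ (j:ℝ) := by exact_mod_cast hj1
  have hdn : (0:ℝ) < t / n := by positivity
  -- normalize the two partition points
  have ex : ((j : ℝ) - 1) * t / n = ((j:ℝ) - 1) * (t / n) := by ring
  have ey : (j : ℝ) * t / n = (j:ℝ) * (t / n) := by ring
  have hx0 : 0 ≤ ((j:ℝ) - 1) * (t / n) := mul_nonneg (by linarith) hdn.le
  have hy0 : 0 < (j:ℝ) * (t / n) := mul_pos (by linarith) hdn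
  have hxy : ((j:ℝ) - 1) * (t / n) ≤ (j:ℝ) * (t / n) := by nlinarith
  rw [ex, ey]
  have hd : (j:ℝ) * (t / n) - ((j:ℝ) - 1) * (t / n) = t / n := by ring
  rw [hd, Real.rpow_mul hx0 (2*H) K, Real.rpow_mul hy0.le (2*H) K]
  apply abs_term_le (Real.rpow_nonneg hx0 _)
    (Real.rpow_le_rpow hx0 hxy (by linarith)) (Real.rpow_pos_of_pos hy0 _)
    (Real.rpow_pos_of_pos hdn _) (Real.rpow_nonneg (by linarith) _) hK0 hK1
  exact gap_final hdn (by rcases Nat.lt_or_ge j 2 with h | h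
                          · left; have : j = 1 := by omega
                            rw [this]; norm_num
                          · right; exact_mod_cast h)
    (by linarith) (by linarith) hK0 hK1 hHK.le (by nlinarith)

theorem bifBm_ito_correction_sums_tendsto_zero
    (H K : ℝ) (hH : H ∈ Set.Ioo (0:ℝ) 1) (hK : K ∈ Set.Ioc (0:ℝ) 1)
    (hHK : 1 < 2*H*K) (t : ℝ) (ht : 0 < t) :
    Tendsto (fun n : ℕ => ∑ j ∈ Finset.Icc 1 n,
        |2 ^ (-K) * ((((j : ℝ) * t / n) ^ (2*H) + (((j : ℝ) - 1) * t / n) ^ (2*H)) ^ K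
              - ((j : ℝ) * t / n - ((j : ℝ) - 1) * t / n) ^ (2*H*K))
          - (((j : ℝ) - 1) * t / n) ^ (2*H*K)
          - (1/2) * (((j : ℝ) * t / n) ^ (2*H*K) - (((j : ℝ) - 1) * t / n) ^ (2*H*K))|)
      atTop (nhds 0) := by
  obtain ⟨hH0, hH1⟩ := hH
  obtain ⟨hK0, hK1⟩ := hK
  set p : ℝ := 2*H*K - 1 with hpdef
  have hp0 : 0 < p := by simp only [hpdef]; linarith
  have hp1 : p ≤ 1 := by simp only [hpdef]; nlinarith
  set C : ℝ := t ^ (2*H*K) * (2 + 20 / p) with hCdef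
  have hC0 : 0 < C := by
    have := Real.rpow_pos_of_pos ht (2*H*K)
    have : (0:ℝ) < 2 + 20 / p := by positivity
    positivity
  -- the dominating sequence
  have hlim : Tendsto (fun n : ℕ => C * (n:ℝ) ^ (1 - 2*H*K)) atTop (nhds 0) := by
    have h1 : Tendsto (fun x : ℝ => x ^ (-(2*H*K - 1))) atTop (nhds 0) :=
      tendsto_rpow_neg_atTop (by linarith)
    have h2 : Tendsto (fun n : ℕ => ((n:ℝ)) ^ (-(2*H*K - 1))) atTop (nhds 0) :=
      h1.comp tendsto_natCast_atTop_atTop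
    have h3 : Tendsto (fun n : ℕ => C * ((n:ℝ)) ^ (-(2*H*K - 1))) atTop (nhds (C * 0)) :=
      h2.const_mul C
    rw [mul_zero] at h3
    convert h3 using 2 with n
    norm_num
  apply squeeze_zero' (Eventually.of_forall fun n => Finset.sum_nonneg fun j _ => abs_nonneg _)
    ?_ hlim
  filter_upwards [eventually_ge_atTop 1] with n hn
  have hn0 : (0:ℝ) < n := by exact_mod_cast hn
  have hn1 : (1:ℝ) ≤ n := by exact_mod_cast hn
  have hdn : (0:ℝ) < t / n := by positivity
  have hD0 : (0:ℝ) < (t/n) ^ (2*H*K) := Real.rpow_pos_of_pos hdn _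
  calc ∑ j ∈ Finset.Icc 1 n, |2 ^ (-K) * ((((j : ℝ) * t / n) ^ (2*H)
            + (((j : ℝ) - 1) * t / n) ^ (2*H)) ^ K
              - ((j : ℝ) * t / n - ((j : ℝ) - 1) * t / n) ^ (2*H*K))
          - (((j : ℝ) - 1) * t / n) ^ (2*H*K)
          - (1/2) * (((j : ℝ) * t / n) ^ (2*H*K) - (((j : ℝ) - 1) * t / n) ^ (2*H*K))|
      ≤ ∑ j ∈ Finset.Icc 1 n, (t / n) ^ (2*H*K) * (2 + 20 * (j : ℝ) ^ (2*H*K - 2)) := by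
        apply Finset.sum_le_sum
        intro j hj
        exact term_bound H K t ⟨hH0, hH1⟩ ⟨hK0, hK1⟩ hHK ht hn (Finset.mem_Icc.mp hj).1
    _ = (t / n) ^ (2*H*K) * (2 * n + 20 * ∑ j ∈ Finset.Icc 1 n, (j : ℝ) ^ (p - 1)) := by
        rw [← Finset.mul_sum]
        congr 1
        rw [show (2*H*K - 2 : ℝ) = p - 1 by rw [hpdef]; ring]
        rw [Finset.sum_add_distrib, Finset.sum_const, ← Finset.mul_sum, Nat.card_Icc]
        simp only [Nat.add_sub_cancel, nsmul_eq_mul]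
        ring
    _ ≤ (t / n) ^ (2*H*K) * (2 * n + 20 * ((n:ℝ) ^ p / p)) := by
        have hs := sum_rpow_le hp0 hp1 n
        have : 2 * (n:ℝ) + 20 * ∑ j ∈ Finset.Icc 1 n, (j : ℝ) ^ (p - 1)
            ≤ 2 * (n:ℝ) + 20 * ((n:ℝ) ^ p / p) := by linarith
        exact mul_le_mul_of_nonneg_left this hD0.le
    _ ≤ (t / n) ^ (2*H*K) * ((n:ℝ) * (2 + 20 / p)) := by
        have h6 : (n:ℝ) ^ p ≤ (n:ℝ) := by
          have := Real.rpow_le_rpow_of_exponent_le hn1 hp1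
          rwa [Real.rpow_one] at this
        have h7 : (n:ℝ) ^ p / p ≤ (n:ℝ) / p := by gcongr
        have : 2 * (n:ℝ) + 20 * ((n:ℝ) ^ p / p) ≤ (n:ℝ) * (2 + 20 / p) := by
          have e : (n:ℝ) * (2 + 20 / p) = 2 * (n:ℝ) + 20 * ((n:ℝ) / p) := by ring
          linarith
        exact mul_le_mul_of_nonneg_left this hD0.le
    _ = C * (n:ℝ) ^ (1 - 2*H*K) := by
        rw [Real.div_rpow ht.le hn0.le, hCdef,
          show (1:ℝ) - 2*H*K = 1 + -(2*H*K) by ring,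
          Real.rpow_add hn0, Real.rpow_one, Real.rpow_neg hn0.le]
        have hne : ((n:ℝ)) ^ (2*H*K) ≠ 0 := (Real.rpow_pos_of_pos hn0 _).ne'
        field_simp
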